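/- Let T and S be A-bounded operators on H admitting A-adjoints (i.e. there exist Ts, Ss with A∘Ts = T*∘A and A∘Ss = S*∘A). Then w_𝔸([[T,S],[−T,−S]]) ≤ w_A(T−S) + (1/2)·‖T+S‖_A. -/

import Mathlib

set_option maxHeartbeats 1000000
set_option synthInstance.maxHeartbeats 1000000

noncomputable def sInner {E : Type*} [NormedAddCommGroup E] [InnerProductSpace ℂ E]
    (A : E →L[ℂ] E) (x y : E) : ℂ := inner ℂ (A x) y

noncomputable def sNorm {E : Type*} [NormedAddCommGroup E] [InnerProductSpace ℂ E]
    (A : E →L[ℂ] E) (x : E) : ℝ := Real.sqrt (sInner A x x).re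

/-- The `A`-operator seminorm. -/
noncomputable def opSNorm {E : Type*} [NormedAddCommGroup E] [InnerProductSpace ℂ E]
    (A T : E →L[ℂ] E) : ℝ := sSup {c | ∃ x : E, sNorm A x = 1 ∧ c = sNorm A (T x)}

/-- The `A`-numerical radius. -/
noncomputable def numRad {E : Type*} [NormedAddCommGroup E] [InnerProductSpace ℂ E]
    (A T : E →L[ℂ] E) : ℝ := sSup {c | ∃ x : E, sNorm A x = 1 ∧ c = ‖sInner A (T x) x‖}

/-- `T` is `A`-bounded. -/
def ABounded {E : Type*} [NormedAddCommGroup E] [InnerProductSpace ℂ E]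
    (A T : E →L[ℂ] E) : Prop := ∃ c > 0, ∀ x : E, sNorm A (T x) ≤ c * sNorm A x

/-- The 2×2 block operator `[[T, X], [Y, S]]` on `H ⊕ H` (with the ℓ² product structure). -/
noncomputable def blk {H : Type*} [NormedAddCommGroup H] [InnerProductSpace ℂ H]
    (T X Y S : H →L[ℂ] H) : WithLp 2 (H × H) →L[ℂ] WithLp 2 (H × H) :=
  ((WithLp.prodContinuousLinearEquiv 2 ℂ H H).symm.toContinuousLinearMap.comp
    (((T.coprod X).prod (Y.coprod S)).comp
      (WithLp.prodContinuousLinearEquiv 2 ℂ H H).toContinuousLinearMap))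

/-- The diagonal operator `𝔸 = diag(A, A)` on `H ⊕ H`. -/
noncomputable def twoA {H : Type*} [NormedAddCommGroup H] [InnerProductSpace ℂ H]
    (A : H →L[ℂ] H) : WithLp 2 (H × H) →L[ℂ] WithLp 2 (H × H) := blk A 0 0 A

section Aux

variable {E : Type*} [NormedAddCommGroup E] [InnerProductSpace ℂ E] [CompleteSpace E]

lemma sInner_eq_R {A R : E →L[ℂ] E} (hRR : R * R = A) (hRsa : IsSelfAdjoint R)
    (x y : E) : sInner A x y = inner ℂ (R x) (R y) := by
  have h1 : A x = R (R x) := by rw [← hRR]; rfl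
  have h2 : ContinuousLinearMap.adjoint R = R := hRsa
  rw [sInner, h1]
  calc (inner ℂ (R (R x)) y : ℂ)
      = inner ℂ ((ContinuousLinearMap.adjoint R) (R x)) y := by rw [h2]
    _ = inner ℂ (R x) (R y) := ContinuousLinearMap.adjoint_inner_left _ _ _

lemma sNorm_eq_R {A R : E →L[ℂ] E} (hRR : R * R = A) (hRsa : IsSelfAdjoint R)
    (x : E) : sNorm A x = ‖R x‖ := by
  rw [sNorm, sInner_eq_R hRR hRsa,
    show (inner ℂ (R x) (R x) : ℂ).re = ‖R x‖ ^ 2 from inner_self_eq_norm_sq (𝕜 := ℂ) (R x)]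
  exact Real.sqrt_sq (norm_nonneg _)

lemma sInner_CS {A R : E →L[ℂ] E} (hRR : R * R = A) (hRsa : IsSelfAdjoint R)
    (x y : E) : ‖sInner A x y‖ ≤ sNorm A x * sNorm A y := by
  rw [sInner_eq_R hRR hRsa, sNorm_eq_R hRR hRsa, sNorm_eq_R hRR hRsa]
  exact norm_inner_le_norm _ _

lemma numRad_nonneg (A T : E →L[ℂ] E) : 0 ≤ numRad A T :=
  Real.sSup_nonneg (by rintro d ⟨x, -, rfl⟩; exact norm_nonneg _)

lemma opSNorm_nonneg (A T : E →L[ℂ] E) : 0 ≤ opSNorm A T :=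
  Real.sSup_nonneg (by rintro d ⟨x, -, rfl⟩; exact Real.sqrt_nonneg _)

lemma sNorm_smul {A R : E →L[ℂ] E} (hRR : R * R = A) (hRsa : IsSelfAdjoint R)
    (c : ℂ) (x : E) : sNorm A (c • x) = ‖c‖ * sNorm A x := by
  rw [sNorm_eq_R hRR hRsa, sNorm_eq_R hRR hRsa, map_smul, norm_smul]

lemma opSNorm_bound {A R : E →L[ℂ] E} (hRR : R * R = A) (hRsa : IsSelfAdjoint R)
    {T : E →L[ℂ] E} (hT : ABounded A T) (z : E) :
    sNorm A (T z) ≤ opSNorm A T * sNorm A z := by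
  obtain ⟨c, hc, hb⟩ := hT
  have hbdd : ∀ d ∈ {c | ∃ x : E, sNorm A x = 1 ∧ c = sNorm A (T x)}, d ≤ c := by
    rintro d ⟨x, hx1, rfl⟩
    calc sNorm A (T x) ≤ c * sNorm A x := hb x
      _ = c := by rw [hx1, mul_one]
  have hnn : 0 ≤ sNorm A z := Real.sqrt_nonneg _
  rcases eq_or_lt_of_le hnn with h0 | h0
  · have : sNorm A (T z) ≤ c * sNorm A z := hb z
    rw [← h0] at this ⊢
    simpa using le_trans this (by simp)
  · set t := sNorm A z with ht
    have h1 : sNorm A (((t : ℂ)⁻¹) • z) = 1 := by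
      rw [sNorm_smul hRR hRsa, norm_inv, Complex.norm_real, Real.norm_of_nonneg hnn]
      field_simp
      exact ht.symm
    have hmem : sNorm A (T (((t : ℂ)⁻¹) • z)) ∈
        {c | ∃ x : E, sNorm A x = 1 ∧ c = sNorm A (T x)} := ⟨_, h1, rfl⟩
    have hle : sNorm A (T (((t : ℂ)⁻¹) • z)) ≤ opSNorm A T :=
      le_csSup ⟨c, hbdd⟩ hmem
    have h2 : sNorm A (T (((t : ℂ)⁻¹) • z)) = t⁻¹ * sNorm A (T z) := by
      rw [map_smul, sNorm_smul hRR hRsa, norm_inv, Complex.norm_real,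
        Real.norm_of_nonneg hnn]
    rw [h2] at hle
    have hit : t⁻¹ * t = 1 := inv_mul_cancel₀ (ne_of_gt h0)
    calc sNorm A (T z) = (t⁻¹ * t) * sNorm A (T z) := by rw [hit, one_mul]
      _ = (t⁻¹ * sNorm A (T z)) * t := by ring
      _ ≤ opSNorm A T * t := mul_le_mul_of_nonneg_right hle (le_of_lt h0)

lemma numRad_bound {A R : E →L[ℂ] E} (hRR : R * R = A) (hRsa : IsSelfAdjoint R)
    {T : E →L[ℂ] E} (hT : ABounded A T) (y : E) :
    ‖sInner A (T y) y‖ ≤ numRad A T * (sNorm A y) ^ 2 := by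
  obtain ⟨c, hc, hb⟩ := hT
  have hbdd : ∀ d ∈ {c | ∃ x : E, sNorm A x = 1 ∧ c = ‖sInner A (T x) x‖}, d ≤ c := by
    rintro d ⟨x, hx1, rfl⟩
    calc ‖sInner A (T x) x‖ ≤ sNorm A (T x) * sNorm A x := sInner_CS hRR hRsa _ _
      _ ≤ (c * sNorm A x) * sNorm A x :=
        mul_le_mul_of_nonneg_right (hb x) (Real.sqrt_nonneg _)
      _ = c := by rw [hx1]; ring
  have hnn : 0 ≤ sNorm A y := Real.sqrt_nonneg _
  rcases eq_or_lt_of_le hnn with h0 | h0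
  · have h1 : ‖sInner A (T y) y‖ ≤ sNorm A (T y) * sNorm A y := sInner_CS hRR hRsa _ _
    rw [← h0] at h1 ⊢
    simpa using h1
  · set t := sNorm A y with ht
    have h1 : sNorm A (((t : ℂ)⁻¹) • y) = 1 := by
      rw [sNorm_smul hRR hRsa, norm_inv, Complex.norm_real, Real.norm_of_nonneg hnn]
      field_simp
      exact ht.symm
    have hmem : ‖sInner A (T (((t : ℂ)⁻¹) • y)) (((t : ℂ)⁻¹) • y)‖ ∈
        {c | ∃ x : E, sNorm A x = 1 ∧ c = ‖sInner A (T x) x‖} := ⟨_, h1, rfl⟩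
    have hle : ‖sInner A (T (((t : ℂ)⁻¹) • y)) (((t : ℂ)⁻¹) • y)‖ ≤ numRad A T :=
      le_csSup ⟨c, hbdd⟩ hmem
    have h2 : ‖sInner A (T (((t : ℂ)⁻¹) • y)) (((t : ℂ)⁻¹) • y)‖
        = t⁻¹ * t⁻¹ * ‖sInner A (T y) y‖ := by
      rw [sInner_eq_R hRR hRsa, map_smul, map_smul, map_smul, inner_smul_left,
        inner_smul_right, ← sInner_eq_R hRR hRsa (T y) y]
      simp only [norm_mul, RCLike.norm_conj, norm_inv, Complex.norm_real,
        Real.norm_of_nonneg hnn]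
      ring
    rw [h2] at hle
    have htne : t ≠ 0 := ne_of_gt h0
    have hit : t⁻¹ * t = 1 := inv_mul_cancel₀ htne
    calc ‖sInner A (T y) y‖ = ((t⁻¹ * t) * (t⁻¹ * t)) * ‖sInner A (T y) y‖ := by
          rw [hit]; ring
      _ = (t⁻¹ * t⁻¹ * ‖sInner A (T y) y‖) * t ^ 2 := by ring
      _ ≤ numRad A T * t ^ 2 := mul_le_mul_of_nonneg_right hle (sq_nonneg t)

end Aux

theorem stmt9 {H : Type*} [NormedAddCommGroup H] [InnerProductSpace ℂ H] [CompleteSpace H]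
    (A : H →L[ℂ] H) (hA : A.IsPositive)
    (T S : H →L[ℂ] H) (hT : ABounded A T) (hS : ABounded A S)
    (hTadm : ∃ Ts : H →L[ℂ] H, A.comp Ts = (ContinuousLinearMap.adjoint T).comp A)
    (hSadm : ∃ Ss : H →L[ℂ] H, A.comp Ss = (ContinuousLinearMap.adjoint S).comp A) :
    numRad (twoA A) (blk T S (-T) (-S)) ≤ numRad A (T - S) + (1 / 2) * opSNorm A (T + S) := by
  -- square root of A
  have h0 : (0 : H →L[ℂ] H) ≤ A := (ContinuousLinearMap.nonneg_iff_isPositive A).mpr hA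
  set R := CFC.sqrt A with hRdef
  have hR0 : (0 : H →L[ℂ] H) ≤ R := CFC.sqrt_nonneg A
  have hRR : R * R = A := CFC.sqrt_mul_sqrt_self A h0
  have hRsa : IsSelfAdjoint R :=
    ((ContinuousLinearMap.nonneg_iff_isPositive R).mp hR0).isSelfAdjoint
  -- boundedness of T - S and T + S
  obtain ⟨cT, hcT, hbT⟩ := hT
  obtain ⟨cS, hcS, hbS⟩ := hS
  have hTmS : ABounded A (T - S) := by
    refine ⟨cT + cS, by positivity, fun x => ?_⟩
    have : sNorm A ((T - S) x) ≤ sNorm A (T x) + sNorm A (S x) := by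
      rw [sNorm_eq_R hRR hRsa, sNorm_eq_R hRR hRsa, sNorm_eq_R hRR hRsa,
        ContinuousLinearMap.sub_apply, map_sub]
      exact norm_sub_le _ _
    calc sNorm A ((T - S) x) ≤ sNorm A (T x) + sNorm A (S x) := this
      _ ≤ cT * sNorm A x + cS * sNorm A x := add_le_add (hbT x) (hbS x)
      _ = (cT + cS) * sNorm A x := by ring
  have hTpS : ABounded A (T + S) := by
    refine ⟨cT + cS, by positivity, fun x => ?_⟩
    have : sNorm A ((T + S) x) ≤ sNorm A (T x) + sNorm A (S x) := by
      rw [sNorm_eq_R hRR hRsa, sNorm_eq_R hRR hRsa, sNorm_eq_R hRR hRsa,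
        ContinuousLinearMap.add_apply, map_add]
      exact norm_add_le _ _
    calc sNorm A ((T + S) x) ≤ sNorm A (T x) + sNorm A (S x) := this
      _ ≤ cT * sNorm A x + cS * sNorm A x := add_le_add (hbT x) (hbS x)
      _ = (cT + cS) * sNorm A x := by ring
  have hRHS : 0 ≤ numRad A (T - S) + (1 / 2) * opSNorm A (T + S) := by
    have := numRad_nonneg A (T - S)
    have := opSNorm_nonneg A (T + S)
    linarith
  apply Real.sSup_le _ hRHS
  rintro c ⟨x, hx1, rfl⟩
  set u := x.fst with hu
  set v := x.snd with hv
  -- value of the sesquilinear form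
  have hfst : (blk T S (-T) (-S) x).fst = T u + S v := rfl
  have hsnd : (blk T S (-T) (-S) x).snd = (-T) u + (-S) v := rfl
  have hAfst : (twoA A (blk T S (-T) (-S) x)).fst = A ((blk T S (-T) (-S) x).fst)
      + (0 : H →L[ℂ] H) ((blk T S (-T) (-S) x).snd) := rfl
  have hval : sInner (twoA A) (blk T S (-T) (-S) x) x
      = sInner A (T u + S v) (u - v) := by
    show (inner ℂ ((twoA A) (blk T S (-T) (-S) x)) x : ℂ) = _
    rw [WithLp.prod_inner_apply]
    show (inner ℂ (A ((blk T S (-T) (-S) x).fst) + (0 : H →L[ℂ] H) ((blk T S (-T) (-S) x).snd)) u : ℂ)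
        + inner ℂ ((0 : H →L[ℂ] H) ((blk T S (-T) (-S) x).fst) + A ((blk T S (-T) (-S) x).snd)) v = _
    rw [hfst, hsnd]
    simp only [ContinuousLinearMap.zero_apply, add_zero, zero_add,
      ContinuousLinearMap.neg_apply]
    have hneg : A (-(T u) + -(S v)) = -(A (T u) + A (S v)) := by
      rw [← neg_add, map_neg, map_add]
    simp only [sInner, map_add, hneg, inner_neg_left, inner_sub_right]
    ring
  -- the seminorm of x
  have hx2 : (sNorm A u) ^ 2 + (sNorm A v) ^ 2 = 1 := by
    have e1 : sInner (twoA A) x x = sInner A u u + sInner A v v := by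
      show (inner ℂ ((twoA A) x) x : ℂ) = _
      rw [WithLp.prod_inner_apply]
      show (inner ℂ (A u + (0 : H →L[ℂ] H) v) u : ℂ)
          + inner ℂ ((0 : H →L[ℂ] H) u + A v) v = _
      simp only [ContinuousLinearMap.zero_apply, add_zero, zero_add]
      rfl
    have e2 : (sInner (twoA A) x x).re = (sInner A u u).re + (sInner A v v).re := by
      rw [e1, Complex.add_re]
    have e3 : Real.sqrt ((sInner A u u).re + (sInner A v v).re) = 1 := by
      rw [sNorm, e2] at hx1; exact hx1
    have e4 : (sInner A u u).re + (sInner A v v).re = 1 := by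
      have h5 : (0:ℝ) ≤ (sInner A u u).re := by
        rw [sInner_eq_R hRR hRsa]; exact inner_self_nonneg (𝕜 := ℂ)
      have h6 : (0:ℝ) ≤ (sInner A v v).re := by
        rw [sInner_eq_R hRR hRsa]; exact inner_self_nonneg (𝕜 := ℂ)
      nlinarith [Real.sq_sqrt (by linarith : (0:ℝ) ≤ (sInner A u u).re + (sInner A v v).re), e3]
    have h7 : (sNorm A u) ^ 2 = (sInner A u u).re := Real.sq_sqrt (by
      rw [sInner_eq_R hRR hRsa]; exact inner_self_nonneg (𝕜 := ℂ))
    have h8 : (sNorm A v) ^ 2 = (sInner A v v).re := Real.sq_sqrt (by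
      rw [sInner_eq_R hRR hRsa]; exact inner_self_nonneg (𝕜 := ℂ))
    rw [h7, h8]; exact e4
  -- decomposition
  set y := u - v with hy
  set z := u + v with hz
  have hdec : T u + S v = (2⁻¹ : ℂ) • ((T - S) y + (T + S) z) := by
    simp only [hy, hz, ContinuousLinearMap.sub_apply, ContinuousLinearMap.add_apply,
      map_sub, map_add]
    module
  have hsplit : sInner A (T u + S v) y
      = (2⁻¹ : ℂ) * (sInner A ((T - S) y) y + sInner A ((T + S) z) y) := by
    rw [hdec, sInner, map_smul, inner_smul_left, map_add, inner_add_left]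
    simp only [sInner]
    rw [show (starRingEnd ℂ) (2⁻¹:ℂ) = 2⁻¹ from Complex.conj_eq_iff_im.mpr (by simp)]
  have hnorm : ‖sInner (twoA A) (blk T S (-T) (-S) x) x‖
      ≤ 2⁻¹ * (‖sInner A ((T - S) y) y‖ + ‖sInner A ((T + S) z) y‖) := by
    rw [hval, hsplit, norm_mul]
    have : ‖(2⁻¹ : ℂ)‖ = 2⁻¹ := by norm_num
    rw [this]
    gcongr
    exact norm_add_le _ _
  -- bounds
  have hb1 : ‖sInner A ((T - S) y) y‖ ≤ numRad A (T - S) * (sNorm A y) ^ 2 :=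
    numRad_bound hRR hRsa hTmS y
  have hb2 : ‖sInner A ((T + S) z) y‖ ≤ opSNorm A (T + S) * sNorm A z * sNorm A y := by
    calc ‖sInner A ((T + S) z) y‖ ≤ sNorm A ((T + S) z) * sNorm A y :=
          sInner_CS hRR hRsa _ _
      _ ≤ (opSNorm A (T + S) * sNorm A z) * sNorm A y :=
          mul_le_mul_of_nonneg_right (opSNorm_bound hRR hRsa hTpS z) (Real.sqrt_nonneg _)
      _ = opSNorm A (T + S) * sNorm A z * sNorm A y := by ring
  -- parallelogram
  have hpar : (sNorm A y) ^ 2 + (sNorm A z) ^ 2 = 2 := by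
    rw [sNorm_eq_R hRR hRsa, sNorm_eq_R hRR hRsa, hy, hz, map_sub, map_add]
    have := parallelogram_law_with_norm ℂ (R u) (R v)
    have h7 : (sNorm A u) ^ 2 = ‖R u‖ ^ 2 := by rw [sNorm_eq_R hRR hRsa]
    have h8 : (sNorm A v) ^ 2 = ‖R v‖ ^ 2 := by rw [sNorm_eq_R hRR hRsa]
    rw [h7, h8] at hx2
    nlinarith [this]
  -- conclude
  have hW : 0 ≤ numRad A (T - S) := numRad_nonneg A (T - S)
  have hN : 0 ≤ opSNorm A (T + S) := opSNorm_nonneg A (T + S)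
  have hay : 0 ≤ sNorm A y := Real.sqrt_nonneg _
  have haz : 0 ≤ sNorm A z := Real.sqrt_nonneg _
  calc ‖sInner (twoA A) (blk T S (-T) (-S) x) x‖
      ≤ 2⁻¹ * (‖sInner A ((T - S) y) y‖ + ‖sInner A ((T + S) z) y‖) := hnorm
    _ ≤ 2⁻¹ * (numRad A (T - S) * (sNorm A y) ^ 2
        + opSNorm A (T + S) * sNorm A z * sNorm A y) := by
        exact mul_le_mul_of_nonneg_left (add_le_add hb1 hb2) (by norm_num)
    _ ≤ numRad A (T - S) + (1 / 2) * opSNorm A (T + S) := by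
        nlinarith [sq_nonneg (sNorm A y - sNorm A z), sq_nonneg (sNorm A y),
          mul_nonneg hW (sq_nonneg (sNorm A y))]
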